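/- As s → ∞, with C_{s,α'} = 2√(π log(s/α')) and fixed 0 < α' < 1, we have s(1 − Φ(√(2 log(s/(C_{s,α'}α'))))) → α'. -/

import Mathlib

open MeasureTheory ProbabilityTheory Real Filter

/-- The standard normal CDF. -/
noncomputable def Phi (y : ℝ) : ℝ := ((gaussianReal 0 1) (Set.Iic y)).toReal

noncomputable def Cs (α' : ℝ) (s : ℕ) : ℝ := 2 * Real.sqrt (Real.pi * Real.log ((s:ℝ) / α'))
noncomputable def Ls (α' : ℝ) (s : ℕ) : ℝ := Real.log ((s:ℝ) / α')
noncomputable def Ms (α' : ℝ) (s : ℕ) : ℝ := Real.log ((s:ℝ) / (Cs α' s * α'))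
noncomputable def ys (α' : ℝ) (s : ℕ) : ℝ := Real.sqrt (2 * Ms α' s)

lemma one_sub_Phi (y : ℝ) :
    1 - Phi y = (Real.sqrt (2 * Real.pi))⁻¹ * ∫ t in Set.Ioi y, Real.exp (-t^2/2) := by
  have hint : Integrable (gaussianPDFReal 0 1) := integrable_gaussianPDFReal 0 1
  have h1 : Phi y = ∫ t in Set.Iic y, gaussianPDFReal 0 1 t := by
    rw [Phi, gaussianReal_apply_eq_integral 0 one_ne_zero, ENNReal.toReal_ofReal]
    exact setIntegral_nonneg measurableSet_Iic fun x _ => gaussianPDFReal_nonneg 0 1 x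
  have h2 : (∫ t in Set.Iic y, gaussianPDFReal 0 1 t) + ∫ t in Set.Ioi y, gaussianPDFReal 0 1 t
      = 1 := by
    rw [intervalIntegral.integral_Iic_add_Ioi hint.integrableOn hint.integrableOn,
      integral_gaussianPDFReal_eq_one 0 one_ne_zero]
  have h3 : ∀ t : ℝ, gaussianPDFReal 0 1 t = (Real.sqrt (2 * Real.pi))⁻¹ * Real.exp (-t^2/2) := by
    intro t
    simp [gaussianPDFReal]
  rw [h1, ← integral_const_mul]
  have : (fun t => (Real.sqrt (2 * Real.pi))⁻¹ * Real.exp (-t^2/2))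
      = gaussianPDFReal 0 1 := by ext t; rw [h3 t]
  rw [this]
  linarith

lemma exp_tendsto : Tendsto (fun t : ℝ => Real.exp (-t^2/2)) atTop (nhds 0) := by
  apply Real.tendsto_exp_atBot.comp
  apply Tendsto.atBot_div_const two_pos
  exact tendsto_neg_atBot_iff.mpr (tendsto_pow_atTop two_ne_zero)

lemma integrable_texp (y : ℝ) : IntegrableOn (fun t : ℝ => t * Real.exp (-t^2/2)) (Set.Ioi y) := by
  have := integrable_mul_exp_neg_mul_sq (b := 1/2) (by norm_num)
  have h : (fun t : ℝ => t * Real.exp (-t^2/2)) = fun t : ℝ => t * Real.exp (-(1/2) * t^2) := by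
    ext t; ring_nf
  rw [h]; exact this.integrableOn

lemma integrable_exp' (y : ℝ) : IntegrableOn (fun t : ℝ => Real.exp (-t^2/2)) (Set.Ioi y) := by
  have := integrable_exp_neg_mul_sq (b := 1/2) (by norm_num)
  have h : (fun t : ℝ => Real.exp (-t^2/2)) = fun t : ℝ => Real.exp (-(1/2) * t^2) := by
    ext t; ring_nf
  rw [h]; exact this.integrableOn

lemma int_texp (y : ℝ) : ∫ t in Set.Ioi y, t * Real.exp (-t^2/2) = Real.exp (-y^2/2) := by
  have hderiv : ∀ x ∈ Set.Ici y, HasDerivAt (fun t : ℝ => -Real.exp (-t^2/2))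
      (x * Real.exp (-x^2/2)) x := by
    intro x _
    have h1 : HasDerivAt (fun t : ℝ => -t^2/2) (-x) x := by
      have := ((hasDerivAt_pow 2 x).neg).div_const 2
      refine this.congr_deriv ?_; push_cast; ring
    have := (h1.exp).neg
    refine this.congr_deriv ?_; ring
  have := integral_Ioi_of_hasDerivAt_of_tendsto' hderiv (integrable_texp y) exp_tendsto.neg
  rw [this]; simp

lemma integrable_inv_exp (y : ℝ) (hy : 0 < y) :
    IntegrableOn (fun t : ℝ => (1 + (t⁻¹)^2) * Real.exp (-t^2/2)) (Set.Ioi y) := by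
  apply Integrable.mono' (g := fun t : ℝ => (1 + (y⁻¹)^2) * Real.exp (-t^2/2))
    ((integrable_exp' y).const_mul _)
  · apply Measurable.aestronglyMeasurable
    fun_prop
  · filter_upwards [ae_restrict_mem measurableSet_Ioi] with t ht
    have hty : y ≤ t := le_of_lt ht
    have ht0 : 0 < t := lt_of_lt_of_le hy hty
    rw [Real.norm_eq_abs, abs_of_nonneg (by positivity)]
    gcongr

lemma int_inv_exp (y : ℝ) (hy : 0 < y) :
    ∫ t in Set.Ioi y, (1 + (t⁻¹)^2) * Real.exp (-t^2/2) = Real.exp (-y^2/2) / y := by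
  have hderiv : ∀ x ∈ Set.Ici y, HasDerivAt (fun t : ℝ => -(Real.exp (-t^2/2) * t⁻¹))
      ((1 + (x⁻¹)^2) * Real.exp (-x^2/2)) x := by
    intro x hx
    have hx0 : x ≠ 0 := (lt_of_lt_of_le hy hx).ne'
    have h1 : HasDerivAt (fun t : ℝ => -t^2/2) (-x) x := by
      have := ((hasDerivAt_pow 2 x).neg).div_const 2
      refine this.congr_deriv ?_; push_cast; ring
    have h2 : HasDerivAt (fun t : ℝ => t⁻¹) (-(x^2)⁻¹) x := by
      simpa using hasDerivAt_inv hx0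
    have := ((h1.exp).mul h2).neg
    refine this.congr_deriv ?_
    field_simp
    ring
  have htend : Tendsto (fun t : ℝ => -(Real.exp (-t^2/2) * t⁻¹)) atTop (nhds 0) := by
    have := (exp_tendsto.mul tendsto_inv_atTop_zero).neg
    simpa using this
  have := integral_Ioi_of_hasDerivAt_of_tendsto' hderiv (integrable_inv_exp y hy) htend
  rw [this]
  field_simp
  ring

lemma tail_le (y : ℝ) (hy : 0 < y) :
    ∫ t in Set.Ioi y, Real.exp (-t^2/2) ≤ Real.exp (-y^2/2) / y := by
  have h1 : ∫ t in Set.Ioi y, Real.exp (-t^2/2) ≤ ∫ t in Set.Ioi y, y⁻¹ * (t * Real.exp (-t^2/2)) := by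
    apply setIntegral_mono_on (integrable_exp' y) ((integrable_texp y).const_mul _)
      measurableSet_Ioi
    intro t ht
    have hty : y ≤ t := le_of_lt ht
    have ht0 : 0 < t := lt_of_lt_of_le hy hty
    rw [← mul_assoc]
    nth_rewrite 1 [← one_mul (Real.exp (-t^2/2))]
    gcongr
    rw [inv_mul_eq_div, le_div_iff₀ hy]
    simpa using hty
  rw [integral_const_mul, int_texp, inv_mul_eq_div] at h1
  exact h1

lemma le_tail (y : ℝ) (hy : 0 < y) :
    y * Real.exp (-y^2/2) / (1 + y^2) ≤ ∫ t in Set.Ioi y, Real.exp (-t^2/2) := by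
  have h1 : ∫ t in Set.Ioi y, (1 + (t⁻¹)^2) * Real.exp (-t^2/2)
      ≤ ∫ t in Set.Ioi y, (1 + (y⁻¹)^2) * Real.exp (-t^2/2) := by
    apply setIntegral_mono_on (integrable_inv_exp y hy) ((integrable_exp' y).const_mul _)
      measurableSet_Ioi
    intro t ht
    have hty : y ≤ t := le_of_lt ht
    have ht0 : 0 < t := lt_of_lt_of_le hy hty
    gcongr
  rw [int_inv_exp y hy, integral_const_mul] at h1
  have hy2 : (0:ℝ) < 1 + (y⁻¹)^2 := by positivity
  have h2 : Real.exp (-y^2/2) / y / (1 + (y⁻¹)^2) ≤ ∫ t in Set.Ioi y, Real.exp (-t^2/2) := by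
    rw [div_le_iff₀ hy2]
    linarith [h1]
  have h3 : Real.exp (-y^2/2) / y / (1 + (y⁻¹)^2) = y * Real.exp (-y^2/2) / (1 + y^2) := by
    field_simp
    ring
  rwa [h3] at h2

lemma hL {α' : ℝ} (h0 : 0 < α') : Tendsto (Ls α') atTop atTop := by
  apply Real.tendsto_log_atTop.comp
  exact (tendsto_natCast_atTop_atTop).atTop_div_const h0

lemma tendsto_logC_div {α' : ℝ} (h0 : 0 < α') :
    Tendsto (fun s => Real.log (Cs α' s) / Ls α' s) atTop (nhds 0) := by
  have hg : Tendsto (fun u : ℝ => Real.log (2 * Real.sqrt (Real.pi * u)) / u) atTop (nhds 0) := by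
    have h1 : Tendsto (fun u : ℝ => Real.log 2 * u⁻¹ + ((1/2) * Real.log Real.pi * u⁻¹
        + (1/2) * (Real.log u / u))) atTop (nhds 0) := by
      have hinv := tendsto_inv_atTop_zero (𝕜 := ℝ)
      have hlog : Tendsto (fun u : ℝ => Real.log u / u) atTop (nhds 0) :=
        Real.isLittleO_log_id_atTop.tendsto_div_nhds_zero
      have := ((hinv.const_mul (Real.log 2)).add
        ((hinv.const_mul ((1/2) * Real.log Real.pi)).add (hlog.const_mul (1/2))))
      simpa using this
    apply h1.congr'
    filter_upwards [eventually_gt_atTop (0:ℝ)] with u hu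
    have hπu : 0 < Real.pi * u := by positivity
    rw [Real.log_mul two_ne_zero (by positivity), Real.log_sqrt hπu.le,
      Real.log_mul Real.pi_ne_zero hu.ne']
    field_simp
  exact hg.comp (hL h0)

lemma eventually_good {α' : ℝ} (h0 : 0 < α') : ∀ᶠ s : ℕ in atTop,
    1 ≤ (s:ℝ) ∧ 1 ≤ Ls α' s ∧ Real.log (Cs α' s) ≤ Ls α' s / 2 ∧
    Ms α' s = Ls α' s - Real.log (Cs α' s) := by
  have hhalf : ∀ᶠ s : ℕ in atTop, Real.log (Cs α' s) / Ls α' s ≤ 1/2 :=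
    (tendsto_logC_div h0).eventually (eventually_le_nhds (by norm_num))
  filter_upwards [eventually_ge_atTop 1, (hL h0).eventually_ge_atTop 1, hhalf]
    with s hs1 hsL hsC
  have hs1' : (1:ℝ) ≤ (s:ℝ) := by exact_mod_cast hs1
  have hLpos : 0 < Ls α' s := lt_of_lt_of_le one_pos hsL
  have hCpos : 0 < Cs α' s := by
    have : 0 < Real.pi * Ls α' s := by positivity
    have h2 : 0 < Real.sqrt (Real.pi * Ls α' s) := Real.sqrt_pos.mpr this
    unfold Cs; unfold Ls at h2; positivity
  refine ⟨hs1', hsL, ?_, ?_⟩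
  · calc Real.log (Cs α' s) = Real.log (Cs α' s) / Ls α' s * Ls α' s := by field_simp
    _ ≤ 1/2 * Ls α' s := mul_le_mul_of_nonneg_right hsC hLpos.le
    _ = Ls α' s / 2 := by ring
  · have hsne : ((s:ℝ)) ≠ 0 := by positivity
    unfold Ms Ls
    rw [Real.log_div hsne (by positivity : Cs α' s * α' ≠ 0),
      Real.log_mul hCpos.ne' h0.ne', Real.log_div hsne h0.ne']
    ring

lemma M_atTop {α' : ℝ} (h0 : 0 < α') : Tendsto (Ms α') atTop atTop := by
  apply tendsto_atTop_mono' _ _ ((hL h0).atTop_div_const two_pos)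
  filter_upwards [eventually_good h0] with s ⟨_, hsL, hsC, hM⟩
  rw [hM]; linarith

lemma sqrtAtTop : Tendsto Real.sqrt atTop atTop := by
  apply (tendsto_rpow_atTop (by norm_num : (0:ℝ) < 1/2)).congr'
  filter_upwards [eventually_ge_atTop (0:ℝ)] with x hx
  exact (Real.sqrt_eq_rpow x).symm

lemma y_atTop {α' : ℝ} (h0 : 0 < α') : Tendsto (ys α') atTop atTop := by
  apply sqrtAtTop.comp
  exact (M_atTop h0).const_mul_atTop two_pos

lemma tendsto_ratio {α' : ℝ} (h0 : 0 < α') :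
    Tendsto (fun s => Ls α' s / Ms α' s) atTop (nhds 1) := by
  have h1 : Tendsto (fun s => (1 - Real.log (Cs α' s) / Ls α' s)⁻¹) atTop (nhds 1) := by
    have := ((tendsto_const_nhds (x := (1:ℝ))).sub (tendsto_logC_div h0)).inv₀ (by norm_num)
    simpa using this
  apply h1.congr'
  filter_upwards [eventually_good h0] with s ⟨_, hsL, hsC, hM⟩
  have hLpos : (0:ℝ) < Ls α' s := lt_of_lt_of_le one_pos hsL
  have hMpos : (0:ℝ) < Ms α' s := by rw [hM]; linarith
  rw [hM]
  field_simp

lemma r_eq {α' : ℝ} (h0 : 0 < α') : ∀ᶠ s : ℕ in atTop,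
    Cs α' s / (Real.sqrt (2 * Real.pi) * ys α' s) = Real.sqrt (Ls α' s / Ms α' s) := by
  filter_upwards [eventually_good h0] with s ⟨_, hsL, hsC, hM⟩
  have hLpos : (0:ℝ) < Ls α' s := lt_of_lt_of_le one_pos hsL
  have hMpos : (0:ℝ) < Ms α' s := by rw [hM]; linarith
  have h2 : Real.sqrt (2 * Real.pi) = Real.sqrt 2 * Real.sqrt Real.pi :=
    Real.sqrt_mul (by norm_num) _
  have h3 : ys α' s = Real.sqrt 2 * Real.sqrt (Ms α' s) := Real.sqrt_mul (by norm_num) _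
  have h4 : Cs α' s = 2 * (Real.sqrt Real.pi * Real.sqrt (Ls α' s)) := by
    unfold Cs Ls
    rw [← Real.sqrt_mul Real.pi_pos.le]
  have h5 : Real.sqrt (Ls α' s / Ms α' s) = Real.sqrt (Ls α' s) / Real.sqrt (Ms α' s) :=
    Real.sqrt_div hLpos.le _
  have h22 : Real.sqrt 2 * Real.sqrt 2 = 2 := Real.mul_self_sqrt (by norm_num)
  have hπ : (0:ℝ) < Real.sqrt Real.pi := Real.sqrt_pos.mpr Real.pi_pos
  have hM' : (0:ℝ) < Real.sqrt (Ms α' s) := Real.sqrt_pos.mpr hMpos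
  rw [h2, h3, h4, h5]
  field_simp
  linear_combination (-1 : ℝ) * h22

lemma eventually_basic {α' : ℝ} (h0 : 0 < α') : ∀ᶠ s : ℕ in atTop,
    1 ≤ (s:ℝ) ∧ 0 < ys α' s ∧ 0 < Cs α' s ∧
    Real.exp (-(ys α' s)^2/2) = Cs α' s * α' / s := by
  filter_upwards [eventually_good h0] with s ⟨hs1, hsL, hsC, hM⟩
  have hLpos : (0:ℝ) < Ls α' s := lt_of_lt_of_le one_pos hsL
  have hMpos : (0:ℝ) < Ms α' s := by rw [hM]; linarith
  have hCpos : 0 < Cs α' s := by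
    have h2 : 0 < Real.sqrt (Real.pi * Ls α' s) := Real.sqrt_pos.mpr (by positivity)
    unfold Cs; unfold Ls at h2; positivity
  have hy : 0 < ys α' s := Real.sqrt_pos.mpr (by linarith)
  refine ⟨hs1, hy, hCpos, ?_⟩
  have hsq : (ys α' s)^2 = 2 * Ms α' s := Real.sq_sqrt (by linarith)
  have hfrac : (0:ℝ) < (s:ℝ) / (Cs α' s * α') := by positivity
  rw [hsq]
  have : -(2 * Ms α' s)/2 = -Ms α' s := by ring
  rw [this, Real.exp_neg, Ms, Real.exp_log hfrac]
  field_simp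

lemma tendsto_hi {α' : ℝ} (h0 : 0 < α') :
    Tendsto (fun s : ℕ => (s:ℝ) * ((Real.sqrt (2 * Real.pi))⁻¹ *
      (Real.exp (-(ys α' s)^2/2) / ys α' s))) atTop (nhds α') := by
  have h1 : Tendsto (fun s : ℕ => α' * Real.sqrt (Ls α' s / Ms α' s)) atTop (nhds α') := by
    have hsq : Tendsto (fun s : ℕ => Real.sqrt (Ls α' s / Ms α' s)) atTop (nhds 1) := by
      have := (Real.continuous_sqrt.tendsto 1).comp (tendsto_ratio h0)
      simpa [Function.comp_def] using this
    have := hsq.const_mul α'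
    simpa using this
  apply h1.congr'
  filter_upwards [eventually_basic h0, r_eq h0] with s ⟨hs1, hy, hC, he⟩ hr
  have hs0 : (s:ℝ) ≠ 0 := by linarith
  rw [← hr, he]
  field_simp

lemma tendsto_sq_ratio : Tendsto (fun t : ℝ => t^2/(1+t^2)) atTop (nhds 1) := by
  have h1 : Tendsto (fun t : ℝ => 1 + t^2) atTop atTop :=
    tendsto_atTop_add_const_left _ 1 (tendsto_pow_atTop two_ne_zero)
  have h2 : Tendsto (fun t : ℝ => 1 - (1+t^2)⁻¹) atTop (nhds 1) := by
    have := (tendsto_const_nhds (x := (1:ℝ))).sub h1.inv_tendsto_atTop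
    simpa using this
  apply h2.congr'
  filter_upwards [eventually_gt_atTop (0:ℝ)] with t ht
  have : (0:ℝ) < 1 + t^2 := by positivity
  field_simp
  ring

lemma tendsto_lo {α' : ℝ} (h0 : 0 < α') :
    Tendsto (fun s : ℕ => (s:ℝ) * ((Real.sqrt (2 * Real.pi))⁻¹ *
      (ys α' s * Real.exp (-(ys α' s)^2/2) / (1 + (ys α' s)^2)))) atTop (nhds α') := by
  have h1 : Tendsto (fun s : ℕ => ((s:ℝ) * ((Real.sqrt (2 * Real.pi))⁻¹ *
      (Real.exp (-(ys α' s)^2/2) / ys α' s))) * ((ys α' s)^2/(1+(ys α' s)^2)))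
      atTop (nhds α') := by
    have := (tendsto_hi h0).mul (tendsto_sq_ratio.comp (y_atTop h0))
    simpa using this
  apply h1.congr'
  filter_upwards [eventually_basic h0] with s ⟨hs1, hy, hC, he⟩
  have h2 : (0:ℝ) < 1 + (ys α' s)^2 := by positivity
  field_simp


/-- With `C_{s,α'} = 2√(π log(s/α'))` and fixed `0 < α' < 1`, as `s → ∞`,
`s (1 − Φ(√(2 log(s/(C_{s,α'} α'))))) → α'`. -/
theorem bonferroni_limit (α' : ℝ) (h0 : 0 < α') (h1 : α' < 1) :
    Tendsto (fun s : ℕ =>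
      (s : ℝ) * (1 - Phi (Real.sqrt (2 * Real.log ((s : ℝ) /
        (2 * Real.sqrt (Real.pi * Real.log ((s : ℝ) / α')) * α'))))))
      atTop (nhds α') := by
  show Tendsto (fun s : ℕ => (s:ℝ) * (1 - Phi (ys α' s))) atTop (nhds α')
  apply tendsto_of_tendsto_of_tendsto_of_le_of_le' (tendsto_lo h0) (tendsto_hi h0)
  · filter_upwards [eventually_basic h0] with s ⟨hs1, hy, hC, he⟩
    rw [one_sub_Phi]
    have hb := le_tail (ys α' s) hy
    have hs0 : (0:ℝ) ≤ (s:ℝ) := by linarith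
    have hsp : (0:ℝ) ≤ (Real.sqrt (2 * Real.pi))⁻¹ := by positivity
    gcongr
  · filter_upwards [eventually_basic h0] with s ⟨hs1, hy, hC, he⟩
    rw [one_sub_Phi]
    have hb := tail_le (ys α' s) hy
    have hs0 : (0:ℝ) ≤ (s:ℝ) := by linarith
    have hsp : (0:ℝ) ≤ (Real.sqrt (2 * Real.pi))⁻¹ := by positivity
    gcongr
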